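/- Let X be a Banach space, Y a closed subspace of X** with δ(Y,X) > 0 (where X is identified with its canonical image in X**), and T: Y → X a bounded linear isomorphism onto a closed subspace of X. Then H = {y - Ty : y ∈ Y} is a closed subspace of X** isomorphic to Y, and δ(H, X) > 0. -/

import Mathlib

open NormedSpace

set_option maxHeartbeats 1000000 in

theorem graph_subspace_closed_isomorphic_and_inclined
    {X : Type*} [NormedAddCommGroup X] [NormedSpace ℝ X] [CompleteSpace X]
    (Y : Submodule ℝ (StrongDual ℝ (StrongDual ℝ X)))
    (hYc : IsClosed (Y : Set (StrongDual ℝ (StrongDual ℝ X))))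
    (hYX : 0 < sInf {r : ℝ | ∃ u ∈ Y, ∃ v : X, ‖u‖ = 1 ∧
        r = ‖u - NormedSpace.inclusionInDoubleDual ℝ X v‖})
    (T : Y →L[ℝ] X)
    (hTinj : Function.Injective T)
    (hTbelow : ∃ m : ℝ, 0 < m ∧ ∀ y : Y, m * ‖(y : StrongDual ℝ (StrongDual ℝ X))‖ ≤ ‖T y‖)
    (hTrange : IsClosed (Set.range T)) :
    IsClosed (Set.range fun y : Y =>
        (y : StrongDual ℝ (StrongDual ℝ X)) -
          NormedSpace.inclusionInDoubleDual ℝ X (T y)) ∧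
      (∃ c C : ℝ, 0 < c ∧ ∀ y : Y,
        c * ‖(y : StrongDual ℝ (StrongDual ℝ X))‖ ≤ ‖(y : StrongDual ℝ (StrongDual ℝ X)) -
            NormedSpace.inclusionInDoubleDual ℝ X (T y)‖ ∧
        ‖(y : StrongDual ℝ (StrongDual ℝ X)) -
            NormedSpace.inclusionInDoubleDual ℝ X (T y)‖ ≤ C * ‖(y : StrongDual ℝ (StrongDual ℝ X))‖) ∧
      0 < sInf {r : ℝ | ∃ h ∈ (Set.range fun y : Y =>
            (y : StrongDual ℝ (StrongDual ℝ X)) -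
              NormedSpace.inclusionInDoubleDual ℝ X (T y)), ∃ v : X, ‖h‖ = 1 ∧
          r = ‖h - NormedSpace.inclusionInDoubleDual ℝ X v‖} := by
  classical
  letI : NormedAddCommGroup Y := @Submodule.normedAddCommGroup ℝ (StrongDual ℝ (StrongDual ℝ X)) _ _ _ Y
  letI : NormedSpace ℝ Y := @Submodule.normedSpace ℝ ℝ _ _ _ (StrongDual ℝ (StrongDual ℝ X)) _ _ _ _ Y
  letI : NormSMulClass ℝ (StrongDual ℝ (StrongDual ℝ X)) :=
    @NormedSpace.toNormSMulClass ℝ (StrongDual ℝ (StrongDual ℝ X)) _ _ _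
  letI : ContinuousSub (StrongDual ℝ (StrongDual ℝ X)) :=
    @IsTopologicalAddGroup.to_continuousSub (StrongDual ℝ (StrongDual ℝ X)) _ _ _
  set J := NormedSpace.inclusionInDoubleDual ℝ X with hJdef
  set δ := sInf {r : ℝ | ∃ u ∈ Y, ∃ v : X, ‖u‖ = 1 ∧ r = ‖u - J v‖} with hδdef
  have hδ : 0 < δ := hYX
  -- key lemma: δ * ‖y‖ ≤ ‖↑y - J v‖ for all y : Y, v : X
  have key : ∀ (y : Y) (v : X),
      δ * ‖y‖ ≤ ‖(y : StrongDual ℝ (StrongDual ℝ X)) - J v‖ := by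
    intro y v
    rcases eq_or_ne y 0 with h0 | h0
    · simp [h0]; exact norm_nonneg (0 - J v)
    · have h0' : (y : StrongDual ℝ (StrongDual ℝ X)) ≠ 0 :=
        fun h => h0 (Subtype.ext h)
      have hy : (0:ℝ) < ‖y‖ :=
        norm_pos_iff (E := StrongDual ℝ (StrongDual ℝ X))
          (a := (y : StrongDual ℝ (StrongDual ℝ X))) |>.mpr h0'
      set u : Y := (‖y‖⁻¹ : ℝ) • y with hu
      have hu1 : ‖(u : StrongDual ℝ (StrongDual ℝ X))‖ = 1 := by
        rw [hu]
        push_cast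
        rw [norm_smul, norm_inv, Real.norm_of_nonneg (norm_nonneg _)]
        exact inv_mul_cancel₀ (ne_of_gt hy)
      have hle : δ ≤ ‖(u : StrongDual ℝ (StrongDual ℝ X)) -
          J ((‖y‖⁻¹ : ℝ) • v)‖ := by
        apply csInf_le
        · exact ⟨0, by rintro r ⟨w, _, v', _, rfl⟩; positivity⟩
        · exact ⟨(u : StrongDual ℝ (StrongDual ℝ X)), u.2,
            (‖y‖⁻¹ : ℝ) • v, hu1, rfl⟩
      have heq : ‖(u : StrongDual ℝ (StrongDual ℝ X)) -
          J ((‖y‖⁻¹ : ℝ) • v)‖ =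
          ‖y‖⁻¹ * ‖(y : StrongDual ℝ (StrongDual ℝ X)) - J v‖ := by
        rw [hu]
        push_cast
        rw [map_smul, show ‖y‖⁻¹ • (y : StrongDual ℝ (StrongDual ℝ X)) - ‖y‖⁻¹ • J v =
            ‖y‖⁻¹ • ((y : StrongDual ℝ (StrongDual ℝ X)) - J v) from (smul_sub ‖y‖⁻¹ (y : StrongDual ℝ (StrongDual ℝ X)) (J v)).symm,
          norm_smul, norm_inv,
          Real.norm_of_nonneg (norm_nonneg _)]
      rw [heq] at hle
      have h3 := mul_le_mul_of_nonneg_right hle (norm_nonneg y)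
      calc δ * ‖y‖ ≤ ‖y‖⁻¹ * ‖(y : StrongDual ℝ (StrongDual ℝ X)) -
            J v‖ * ‖y‖ := h3
        _ = ‖(y : StrongDual ℝ (StrongDual ℝ X)) - J v‖ := by
            rw [mul_comm (‖y‖⁻¹), mul_assoc, inv_mul_cancel₀ (ne_of_gt hy), mul_one]
  -- the graph map as a CLM
  set S : Y →L[ℝ] StrongDual ℝ (StrongDual ℝ X) :=
    ⟨@HSub.hSub _ _ _ (@instHSub _ (@LinearMap.instSub ℝ ℝ Y (StrongDual ℝ (StrongDual ℝ X))
        _ _ _ _ _ _ (RingHom.id ℝ))) (Y.subtypeL : Y →ₗ[ℝ] StrongDual ℝ (StrongDual ℝ X))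
      ((J.comp T : Y →L[ℝ] StrongDual ℝ (StrongDual ℝ X)) : Y →ₗ[ℝ] StrongDual ℝ (StrongDual ℝ X)),
      Y.subtypeL.continuous.sub (J.comp T).continuous⟩ with hSdef
  have hS : ∀ y : Y, S y = (y : StrongDual ℝ (StrongDual ℝ X)) -
      J (T y) := fun y => rfl
  have hlow : ∀ y : Y, δ * ‖y‖ ≤ ‖S y‖ := fun y => by rw [hS]; exact key y (T y)
  set C : ℝ := 1 + ‖T‖ with hCdef
  have hC : 0 < C := by positivity
  have hupp : ∀ y : Y, ‖S y‖ ≤ C * ‖y‖ := by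
    intro y
    rw [hS]
    calc ‖(y : StrongDual ℝ (StrongDual ℝ X)) - J (T y)‖
        ≤ ‖(y : StrongDual ℝ (StrongDual ℝ X))‖ + ‖J (T y)‖ :=
          norm_sub_le (y : StrongDual ℝ (StrongDual ℝ X)) (J (T y))
      _ ≤ ‖y‖ + ‖T y‖ := by
          gcongr
          · exact le_of_eq rfl
          · exact NormedSpace.double_dual_bound ℝ X (T y)
      _ ≤ ‖y‖ + ‖T‖ * ‖y‖ := by gcongr; exact T.le_opNorm y
      _ = C * ‖y‖ := by ring
  have hrange : (Set.range fun y : Y =>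
      (y : StrongDual ℝ (StrongDual ℝ X)) - J (T y)) = Set.range S := by
    exact congrArg Set.range (funext fun y => (hS y).symm)
  haveI : CompleteSpace Y := hYc.completeSpace_coe
  have hanti : AntilipschitzWith (⟨δ, hδ.le⟩ : NNReal)⁻¹ S := by
    apply @AddMonoidHomClass.antilipschitz_of_bound _ _ _ _ _ _ (SemilinearMapClass.instAddMonoidHomClass (Y →ₗ[ℝ] StrongDual ℝ (StrongDual ℝ X)))
      (S : Y →ₗ[ℝ] StrongDual ℝ (StrongDual ℝ X))
    intro x
    change ‖x‖ ≤ (((⟨δ, hδ.le⟩ : NNReal)⁻¹ : NNReal) : ℝ) * ‖S x‖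
    exact (le_inv_mul_iff₀ hδ).mpr (hlow x)
  have hclosed : IsClosed (Set.range S) := hanti.isClosed_range
    (@AddMonoidHomClass.lipschitz_of_bound _ _ _ _ _ _ (SemilinearMapClass.instAddMonoidHomClass (Y →ₗ[ℝ] StrongDual ℝ (StrongDual ℝ X)))
      (S : Y →ₗ[ℝ] StrongDual ℝ (StrongDual ℝ X)) C
      hupp).uniformContinuous
  refine ⟨hrange ▸ hclosed, ⟨δ, C, hδ, fun y => ⟨hlow y, hupp y⟩⟩, ?_⟩
  -- third part
  have hYne : {r : ℝ | ∃ u ∈ Y, ∃ v : X, ‖u‖ = 1 ∧ r = ‖u - J v‖}.Nonempty := by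
    by_contra h
    rw [Set.not_nonempty_iff_eq_empty] at h
    rw [hδdef, h, Real.sInf_empty] at hδ
    exact lt_irrefl 0 hδ
  obtain ⟨r, u, huY, v, hu1, -⟩ := hYne
  set y₀ : Y := ⟨u, huY⟩ with hy₀
  have hy₀ne : y₀ ≠ 0 := by
    intro h
    apply one_ne_zero (α := ℝ)
    rw [← hu1]
    have hu0 : u = 0 := congrArg Subtype.val h
    simp [hu0]; exact ContinuousLinearMap.opNorm_zero
  have hSy₀ : ‖S y₀‖ ≠ 0 := by
    intro h
    have h1 := hlow y₀
    rw [h] at h1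
    have h0' : (y₀ : StrongDual ℝ (StrongDual ℝ X)) ≠ 0 :=
      fun hh => hy₀ne (Subtype.ext hh)
    have h2 : (0:ℝ) < ‖y₀‖ :=
      norm_pos_iff (E := StrongDual ℝ (StrongDual ℝ X))
        (a := (y₀ : StrongDual ℝ (StrongDual ℝ X))) |>.mpr h0'
    nlinarith
  -- the set from part 3
  set s3 : Set ℝ := {r : ℝ | ∃ h ∈ (Set.range fun y : Y =>
      (y : StrongDual ℝ (StrongDual ℝ X)) - J (T y)), ∃ v : X,
      ‖h‖ = 1 ∧ r = ‖h - J v‖} with hs3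
  have hne3 : s3.Nonempty := by
    refine ⟨‖(‖S y₀‖⁻¹ • S y₀) - J 0‖, ‖S y₀‖⁻¹ • S y₀, ?_, 0, ?_, rfl⟩
    · rw [hrange]
      exact ⟨‖S y₀‖⁻¹ • y₀, by rw [map_smul]⟩
    · rw [norm_smul, norm_inv, Real.norm_of_nonneg (norm_nonneg (S y₀))]
      field_simp
  have hb3 : ∀ r ∈ s3, δ / C ≤ r := by
    rintro r ⟨h, hmem, w, hh1, rfl⟩
    rw [hrange] at hmem
    obtain ⟨y, rfl⟩ := hmem
    have h1 : (1:ℝ) ≤ C * ‖y‖ := by rw [← hh1]; exact hupp y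
    have hyC : 1 / C ≤ ‖y‖ := by rw [div_le_iff₀ hC]; linarith [mul_comm C ‖y‖, h1]
    have h2 : δ * ‖y‖ ≤ ‖S y - J w‖ := by
      have : S y - J w = (y : StrongDual ℝ (StrongDual ℝ X)) -
          J (T y + w) := by rw [hS, map_add]; abel
      rw [this]
      exact key y (T y + w)
    calc δ / C = δ * (1 / C) := by ring
      _ ≤ δ * ‖y‖ := mul_le_mul_of_nonneg_left hyC hδ.le
      _ ≤ ‖S y - J w‖ := h2
  exact lt_of_lt_of_le (div_pos hδ hC) (le_csInf hne3 hb3)
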